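/- Let λ be an atomless Borel probability measure on [0,1]. Then for every Borel set A ⊆ [0,1], (Vλ)(A) = ∫_A ( 2q·λ([0,x]) + 2p·λ([x,1]) ) dλ(x); that is, the Radon–Nikodym density of Vλ with respect to λ is the function x ↦ 2q·λ([0,x]) + 2p·λ([x,1]). -/

import Mathlib

open MeasureTheory Set Filter Topology ENNReal

/-- The unit interval `[0,1]` as a measurable space (with the Borel σ-algebra). -/
abbrev UnitInt : Type := ↥(Set.Icc (0:ℝ) 1)

/-- The family of measures `P(x,y,·)`: `p·δ_x + q·δ_y` if `x < y`, `δ_x` if `x = y`,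
and `p·δ_y + q·δ_x` if `x > y`. -/
noncomputable def Pker (p q : ℝ) (x y : UnitInt) : Measure UnitInt :=
  if x < y then ENNReal.ofReal p • Measure.dirac x + ENNReal.ofReal q • Measure.dirac y
  else if y < x then ENNReal.ofReal p • Measure.dirac y + ENNReal.ofReal q • Measure.dirac x
  else Measure.dirac x

section Aux

variable (lam : Measure UnitInt) [IsProbabilityMeasure lam]

lemma meas_inter_Iio (A : Set UnitInt) (hA : MeasurableSet A) :
    Measurable fun x => lam (A ∩ Iio x) := by
  have hlt : MeasurableSet {pr : UnitInt × UnitInt | pr.2 < pr.1} :=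
    measurableSet_lt measurable_snd measurable_fst
  have hs : MeasurableSet {pr : UnitInt × UnitInt | pr.2 ∈ A ∧ pr.2 < pr.1} :=
    (measurable_snd hA).inter hlt
  have h := measurable_measure_prodMk_left (ν := lam) hs
  convert h using 2 with x
  rfl

lemma meas_inter_Ioi (A : Set UnitInt) (hA : MeasurableSet A) :
    Measurable fun x => lam (A ∩ Ioi x) := by
  have hlt : MeasurableSet {pr : UnitInt × UnitInt | pr.1 < pr.2} :=
    measurableSet_lt measurable_fst measurable_snd
  have hs : MeasurableSet {pr : UnitInt × UnitInt | pr.2 ∈ A ∧ pr.1 < pr.2} :=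
    (measurable_snd hA).inter hlt
  have h := measurable_measure_prodMk_left (ν := lam) hs
  convert h using 2 with x
  rfl

lemma meas_Ici : Measurable fun x : UnitInt => lam (Ici x) := by
  have hs : MeasurableSet {pr : UnitInt × UnitInt | pr.1 ≤ pr.2} :=
    measurableSet_le measurable_fst measurable_snd
  have h := measurable_measure_prodMk_left (ν := lam) hs
  convert h using 2 with x
  rfl

lemma meas_Iic : Measurable fun x : UnitInt => lam (Iic x) := by
  have hs : MeasurableSet {pr : UnitInt × UnitInt | pr.2 ≤ pr.1} :=
    measurableSet_le measurable_snd measurable_fst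
  have h := measurable_measure_prodMk_left (ν := lam) hs
  convert h using 2 with x
  rfl

lemma fubini_lt (A : Set UnitInt) (hA : MeasurableSet A) :
    ∫⁻ x, lam (A ∩ Iio x) ∂lam = ∫⁻ x in A, lam (Ioi x) ∂lam := by
  set s : Set (UnitInt × UnitInt) := {pr | pr.2 ∈ A ∧ pr.2 < pr.1} with hsdef
  have hlt : MeasurableSet {pr : UnitInt × UnitInt | pr.2 < pr.1} :=
    measurableSet_lt measurable_snd measurable_fst
  have hs : MeasurableSet s := (measurable_snd hA).inter hlt
  have h1 : ∀ x : UnitInt, lam (A ∩ Iio x) = ∫⁻ y, s.indicator 1 (x, y) ∂lam := by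
    intro x
    have hptw : ∀ y, s.indicator (1 : UnitInt × UnitInt → ℝ≥0∞) (x, y)
        = (A ∩ Iio x).indicator 1 y := by
      intro y
      by_cases h : y ∈ A ∧ y < x
      · rw [Set.indicator_of_mem (show (x, y) ∈ s from h),
          Set.indicator_of_mem (show y ∈ A ∩ Iio x from ⟨h.1, h.2⟩)]
        rfl
      · rw [Set.indicator_of_notMem (show (x, y) ∉ s from h),
          Set.indicator_of_notMem (show y ∉ A ∩ Iio x from fun hc => h ⟨hc.1, hc.2⟩)]
    simp_rw [hptw]
    rw [lintegral_indicator (hA.inter measurableSet_Iio)]; simp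
  simp_rw [h1]
  have hmeas : AEMeasurable (Function.uncurry fun x y => s.indicator
      (1 : UnitInt × UnitInt → ℝ≥0∞) (x, y)) (lam.prod lam) := by
    have : (Function.uncurry fun x y => s.indicator (1 : UnitInt × UnitInt → ℝ≥0∞) (x, y))
        = s.indicator 1 := rfl
    rw [this]; exact (measurable_one.indicator hs).aemeasurable
  rw [lintegral_lintegral_swap hmeas]
  have h2 : ∀ y : UnitInt, ∫⁻ x, s.indicator 1 (x, y) ∂lam
      = A.indicator (fun y => lam (Ioi y)) y := by
    intro y
    by_cases hy : y ∈ A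
    · have hptw : ∀ x, s.indicator (1 : UnitInt × UnitInt → ℝ≥0∞) (x, y)
          = (Ioi y).indicator 1 x := by
        intro x
        by_cases h : y < x
        · rw [Set.indicator_of_mem (show (x, y) ∈ s from ⟨hy, h⟩),
            Set.indicator_of_mem (show x ∈ Ioi y from h)]
          rfl
        · rw [Set.indicator_of_notMem (show (x, y) ∉ s from fun hc => h hc.2),
            Set.indicator_of_notMem (show x ∉ Ioi y from h)]
      simp_rw [hptw]
      rw [lintegral_indicator measurableSet_Ioi]; simp [Set.indicator_of_mem hy]
    · have hptw : ∀ x, s.indicator (1 : UnitInt × UnitInt → ℝ≥0∞) (x, y) = 0 := by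
        intro x
        exact Set.indicator_of_notMem (show (x, y) ∉ s from fun hc => hy hc.1) _
      simp_rw [hptw]
      simp [Set.indicator_of_notMem hy]
  simp_rw [h2]
  exact lintegral_indicator hA _

lemma fubini_gt (A : Set UnitInt) (hA : MeasurableSet A) :
    ∫⁻ x, lam (A ∩ Ioi x) ∂lam = ∫⁻ x in A, lam (Iio x) ∂lam := by
  set s : Set (UnitInt × UnitInt) := {pr | pr.2 ∈ A ∧ pr.1 < pr.2} with hsdef
  have hlt : MeasurableSet {pr : UnitInt × UnitInt | pr.1 < pr.2} :=
    measurableSet_lt measurable_fst measurable_snd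
  have hs : MeasurableSet s := (measurable_snd hA).inter hlt
  have h1 : ∀ x : UnitInt, lam (A ∩ Ioi x) = ∫⁻ y, s.indicator 1 (x, y) ∂lam := by
    intro x
    have hptw : ∀ y, s.indicator (1 : UnitInt × UnitInt → ℝ≥0∞) (x, y)
        = (A ∩ Ioi x).indicator 1 y := by
      intro y
      by_cases h : y ∈ A ∧ x < y
      · rw [Set.indicator_of_mem (show (x, y) ∈ s from h),
          Set.indicator_of_mem (show y ∈ A ∩ Ioi x from ⟨h.1, h.2⟩)]
        rfl
      · rw [Set.indicator_of_notMem (show (x, y) ∉ s from h),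
          Set.indicator_of_notMem (show y ∉ A ∩ Ioi x from fun hc => h ⟨hc.1, hc.2⟩)]
    simp_rw [hptw]
    rw [lintegral_indicator (hA.inter measurableSet_Ioi)]; simp
  simp_rw [h1]
  have hmeas : AEMeasurable (Function.uncurry fun x y => s.indicator
      (1 : UnitInt × UnitInt → ℝ≥0∞) (x, y)) (lam.prod lam) := by
    have : (Function.uncurry fun x y => s.indicator (1 : UnitInt × UnitInt → ℝ≥0∞) (x, y))
        = s.indicator 1 := rfl
    rw [this]; exact (measurable_one.indicator hs).aemeasurable
  rw [lintegral_lintegral_swap hmeas]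
  have h2 : ∀ y : UnitInt, ∫⁻ x, s.indicator 1 (x, y) ∂lam
      = A.indicator (fun y => lam (Iio y)) y := by
    intro y
    by_cases hy : y ∈ A
    · have hptw : ∀ x, s.indicator (1 : UnitInt × UnitInt → ℝ≥0∞) (x, y)
          = (Iio y).indicator 1 x := by
        intro x
        by_cases h : x < y
        · rw [Set.indicator_of_mem (show (x, y) ∈ s from ⟨hy, h⟩),
            Set.indicator_of_mem (show x ∈ Iio y from h)]
          rfl
        · rw [Set.indicator_of_notMem (show (x, y) ∉ s from fun hc => h hc.2),
            Set.indicator_of_notMem (show x ∉ Iio y from h)]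
      simp_rw [hptw]
      rw [lintegral_indicator measurableSet_Iio]; simp [Set.indicator_of_mem hy]
    · have hptw : ∀ x, s.indicator (1 : UnitInt × UnitInt → ℝ≥0∞) (x, y) = 0 := by
        intro x
        exact Set.indicator_of_notMem (show (x, y) ∉ s from fun hc => hy hc.1) _
      simp_rw [hptw]
      simp [Set.indicator_of_notMem hy]
  simp_rw [h2]
  exact lintegral_indicator hA _

lemma inner_int (p q : ℝ) [NullSingletonClass lam]
    (A : Set UnitInt) (hA : MeasurableSet A) (x : UnitInt) :
    ∫⁻ y, Pker p q x y A ∂lam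
      = ENNReal.ofReal p * (lam (A ∩ Iio x) + A.indicator 1 x * lam (Ici x))
        + ENNReal.ofReal q * (lam (A ∩ Ioi x) + A.indicator 1 x * lam (Iic x)) := by
  have h0 : ∀ᵐ y ∂lam, y ≠ x := by
    rw [ae_iff]; simpa using measure_singleton (μ := lam) x
  have hae : ∀ᵐ y ∂lam, Pker p q x y A
      = ENNReal.ofReal p * A.indicator 1 (min x y) + ENNReal.ofReal q * A.indicator 1 (max x y) := by
    filter_upwards [h0] with y hy
    rcases lt_or_gt_of_ne (Ne.symm hy) with hlt | hgt
    · simp [Pker, hlt, Measure.dirac_apply, Measure.smul_apply, smul_eq_mul,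
        min_eq_left hlt.le, max_eq_right hlt.le]
    · simp [Pker, hgt, hgt.not_gt, Measure.dirac_apply, Measure.smul_apply, smul_eq_mul,
        min_eq_right hgt.le, max_eq_left hgt.le]
  rw [lintegral_congr_ae hae]
  have hf : Measurable fun y => A.indicator (1 : UnitInt → ℝ≥0∞) (min x y) :=
    (measurable_one.indicator hA).comp (measurable_const.min measurable_id)
  rw [lintegral_add_left' ((hf.const_mul _).aemeasurable),
    lintegral_const_mul' _ _ ENNReal.ofReal_ne_top,
    lintegral_const_mul' _ _ ENNReal.ofReal_ne_top]
  have h1 : ∫⁻ y, A.indicator 1 (min x y) ∂lam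
      = lam (A ∩ Iio x) + A.indicator 1 x * lam (Ici x) := by
    rw [← lintegral_add_compl (fun y => A.indicator (1 : UnitInt → ℝ≥0∞) (min x y))
      (measurableSet_Iio (a := x))]
    congr 1
    · rw [setLIntegral_congr_fun measurableSet_Iio
        (fun y (hy : y < x) => by rw [min_eq_right hy.le]),
        lintegral_indicator hA]
      simp [Measure.restrict_apply hA]
    · rw [compl_Iio,
        setLIntegral_congr_fun measurableSet_Ici
          (fun y (hy : x ≤ y) => by rw [min_eq_left hy]),
        setLIntegral_const]
  have h2 : ∫⁻ y, A.indicator 1 (max x y) ∂lam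
      = lam (A ∩ Ioi x) + A.indicator 1 x * lam (Iic x) := by
    rw [← lintegral_add_compl (fun y => A.indicator (1 : UnitInt → ℝ≥0∞) (max x y))
      (measurableSet_Ioi (a := x))]
    congr 1
    · rw [setLIntegral_congr_fun measurableSet_Ioi
        (fun y (hy : x < y) => by rw [max_eq_right hy.le]),
        lintegral_indicator hA]
      simp [Measure.restrict_apply hA]
    · rw [compl_Ioi,
        setLIntegral_congr_fun measurableSet_Iic
          (fun y (hy : y ≤ x) => by rw [max_eq_left hy]),
        setLIntegral_const]
  rw [h1, h2]

end Aux

/-- for an atomless Borel probability measure λ on [0,1], the measure Vλ has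
Radon–Nikodym density x ↦ 2q·λ([0,x]) + 2p·λ([x,1]) with respect to λ. -/
theorem V_density_formula (p q : ℝ) (hp : 0 ≤ p) (hq : 0 ≤ q) (hpq : p + q = 1)
    (V : Measure UnitInt → Measure UnitInt)
    (hV : ∀ (μ : Measure UnitInt) (A : Set UnitInt), MeasurableSet A →
      V μ A = ∫⁻ x, ∫⁻ y, Pker p q x y A ∂μ ∂μ)
    (lam : Measure UnitInt) [IsProbabilityMeasure lam] [NullSingletonClass lam] :
    (∀ A : Set UnitInt, MeasurableSet A →
      V lam A = ∫⁻ x in A,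
        (ENNReal.ofReal (2*q) * lam (Set.Iic x) + ENNReal.ofReal (2*p) * lam (Set.Ici x)) ∂lam) ∧
    V lam = lam.withDensity
      (fun x => ENNReal.ofReal (2*q) * lam (Set.Iic x) + ENNReal.ofReal (2*p) * lam (Set.Ici x)) := by
  have key : ∀ A : Set UnitInt, MeasurableSet A →
      V lam A = ∫⁻ x in A,
        (ENNReal.ofReal (2*q) * lam (Set.Iic x) + ENNReal.ofReal (2*p) * lam (Set.Ici x)) ∂lam := by
    intro A hA
    rw [hV lam A hA]
    simp_rw [inner_int lam p q A hA]
    have hm1 := meas_inter_Iio lam A hA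
    have hm2 : Measurable fun x : UnitInt => A.indicator (1 : UnitInt → ℝ≥0∞) x * lam (Ici x) :=
      (measurable_one.indicator hA).mul (meas_Ici lam)
    have hm3 := meas_inter_Ioi lam A hA
    have hm4 : Measurable fun x : UnitInt => A.indicator (1 : UnitInt → ℝ≥0∞) x * lam (Iic x) :=
      (measurable_one.indicator hA).mul (meas_Iic lam)
    rw [lintegral_add_left' (f := fun x => ENNReal.ofReal p * (lam (A ∩ Iio x) + A.indicator (1 : UnitInt → ℝ≥0∞) x * lam (Ici x))) (((hm1.add hm2).const_mul _).aemeasurable),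
      lintegral_const_mul' _ _ ENNReal.ofReal_ne_top,
      lintegral_const_mul' _ _ ENNReal.ofReal_ne_top,
      lintegral_add_left' hm1.aemeasurable,
      lintegral_add_left' hm3.aemeasurable]
    have hind1 : ∫⁻ x, A.indicator (1 : UnitInt → ℝ≥0∞) x * lam (Ici x) ∂lam
        = ∫⁻ x in A, lam (Ici x) ∂lam := by
      have hptw : ∀ x, A.indicator (1 : UnitInt → ℝ≥0∞) x * lam (Ici x)
          = A.indicator (fun x => lam (Ici x)) x := by
        intro x; by_cases hx : x ∈ A <;> simp [hx]
      simp_rw [hptw]; exact lintegral_indicator hA _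
    have hind2 : ∫⁻ x, A.indicator (1 : UnitInt → ℝ≥0∞) x * lam (Iic x) ∂lam
        = ∫⁻ x in A, lam (Iic x) ∂lam := by
      have hptw : ∀ x, A.indicator (1 : UnitInt → ℝ≥0∞) x * lam (Iic x)
          = A.indicator (fun x => lam (Iic x)) x := by
        intro x; by_cases hx : x ∈ A <;> simp [hx]
      simp_rw [hptw]; exact lintegral_indicator hA _
    rw [fubini_lt lam A hA, fubini_gt lam A hA, hind1, hind2]
    have hIoi : ∫⁻ x in A, lam (Ioi x) ∂lam = ∫⁻ x in A, lam (Ici x) ∂lam :=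
      lintegral_congr fun x => measure_congr Ioi_ae_eq_Ici
    have hIio : ∫⁻ x in A, lam (Iio x) ∂lam = ∫⁻ x in A, lam (Iic x) ∂lam :=
      lintegral_congr fun x => measure_congr Iio_ae_eq_Iic
    rw [hIoi, hIio]
    rw [lintegral_add_left' (((meas_Iic lam).const_mul _).aemeasurable),
      lintegral_const_mul' _ _ ENNReal.ofReal_ne_top,
      lintegral_const_mul' _ _ ENNReal.ofReal_ne_top]
    have h2p : ENNReal.ofReal (2*p) = ENNReal.ofReal p + ENNReal.ofReal p := by
      rw [two_mul, ENNReal.ofReal_add hp hp]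
    have h2q : ENNReal.ofReal (2*q) = ENNReal.ofReal q + ENNReal.ofReal q := by
      rw [two_mul, ENNReal.ofReal_add hq hq]
    rw [h2p, h2q]
    ring
  refine ⟨key, ?_⟩
  ext A hA
  rw [key A hA, withDensity_apply _ hA]
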